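/- arXiv:1802.05251 — 2 statements merged into one kernel-verified Lean document; each statement's English description precedes it below -/
import Mathlib

section
/- Let F : ℝ^p → ℝ be L-smooth with minimum F*. Run noisy gradient descent x_{k+1} = x_k − (1/L)(∇F(x_k) + z_k) for T steps with independent mean-zero noise of second moment pσ². If m is sampled uniformly from {0,...,T−1}, then E[‖∇F(x_m)‖²] ≤ 2L(F(x_0) − F*)/T + pσ². -/
open MeasureTheory ProbabilityTheory InnerProductSpace

lemma descent_lemma {p : ℕ} (L : ℝ) (hL : 0 < L)
    (F : EuclideanSpace ℝ (Fin p) → ℝ)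
    (gradF : EuclideanSpace ℝ (Fin p) → EuclideanSpace ℝ (Fin p))
    (hdiff : ∀ x, HasGradientAt F (gradF x) x)
    (hLip : LipschitzWith (Real.toNNReal L) gradF)
    (x v : EuclideanSpace ℝ (Fin p)) :
    F (x + v) ≤ F x + (inner ℝ (gradF x) v : ℝ) + L / 2 * ‖v‖ ^ 2 := by
  set φ : ℝ → ℝ := fun t => F (x + t • v) - t * (inner ℝ (gradF x) v : ℝ) - L / 2 * t ^ 2 * ‖v‖ ^ 2
    with hφ
  have hderiv : ∀ t : ℝ, HasDerivAt φ
      ((inner ℝ (gradF (x + t • v)) v : ℝ) - (inner ℝ (gradF x) v : ℝ) - L * t * ‖v‖ ^ 2) t := by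
    intro t
    have h1 : HasDerivAt (fun t : ℝ => x + t • v) v t := by
      simpa using ((hasDerivAt_id t).smul_const v).const_add x
    have h2 : HasDerivAt (fun t : ℝ => F (x + t • v)) ((inner ℝ (gradF (x + t • v)) v : ℝ)) t := by
      have := ((hdiff (x + t • v)).hasFDerivAt.comp_hasDerivAt t h1)
      simp [InnerProductSpace.toDual_apply_apply] at this; exact this
    have h3 : HasDerivAt (fun t : ℝ => t * (inner ℝ (gradF x) v : ℝ))
        ((inner ℝ (gradF x) v : ℝ)) t := by simpa using (hasDerivAt_id t).mul_const _
    have h4 : HasDerivAt (fun t : ℝ => L / 2 * t ^ 2 * ‖v‖ ^ 2) (L * t * ‖v‖ ^ 2) t := by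
      have := ((hasDerivAt_pow 2 t).const_mul (L / 2)).mul_const (‖v‖ ^ 2)
      rw [show L * t * ‖v‖ ^ 2 = L / 2 * (((2:ℕ):ℝ) * t ^ (2 - 1)) * ‖v‖ ^ 2 by push_cast; ring]; exact this
    exact (h2.sub h3).sub h4
  have hanti : AntitoneOn φ (Set.Icc (0:ℝ) 1) := by
    apply antitoneOn_of_deriv_nonpos (convex_Icc 0 1)
    · exact fun t _ => (hderiv t).continuousAt.continuousWithinAt
    · exact fun t _ => (hderiv t).differentiableAt.differentiableWithinAt
    · intro t ht
      rw [interior_Icc] at ht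
      rw [(hderiv t).deriv]
      have key : (inner ℝ (gradF (x + t • v)) v : ℝ) - (inner ℝ (gradF x) v : ℝ)
          ≤ L * t * ‖v‖ ^ 2 := by
        have h5 : (inner ℝ (gradF (x + t • v)) v : ℝ) - (inner ℝ (gradF x) v : ℝ)
            = (inner ℝ (gradF (x + t • v) - gradF x) v : ℝ) := by
          rw [inner_sub_left]
        rw [h5]
        calc (inner ℝ (gradF (x + t • v) - gradF x) v : ℝ)
            ≤ ‖gradF (x + t • v) - gradF x‖ * ‖v‖ := real_inner_le_norm _ _
          _ ≤ (L * ‖t • v‖) * ‖v‖ := by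
              apply mul_le_mul_of_nonneg_right _ (norm_nonneg _)
              have := hLip.norm_sub_le (x + t • v) x
              simpa [Real.coe_toNNReal L hL.le] using this
          _ = L * t * ‖v‖ ^ 2 := by
              rw [norm_smul, Real.norm_eq_abs, abs_of_pos ht.1]; ring
      linarith
  have := hanti (Set.mem_Icc.2 ⟨le_refl 0, zero_le_one⟩) (Set.mem_Icc.2 ⟨zero_le_one, le_refl 1⟩)
    zero_le_one
  simp only [hφ, zero_smul, one_smul, add_zero, zero_mul, zero_pow, mul_zero, sub_zero,
    one_pow, mul_one, one_mul] at this
  linarith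

lemma step_lemma {p : ℕ} (L : ℝ) (hL : 0 < L)
    (F : EuclideanSpace ℝ (Fin p) → ℝ)
    (gradF : EuclideanSpace ℝ (Fin p) → EuclideanSpace ℝ (Fin p))
    (hdiff : ∀ x, HasGradientAt F (gradF x) x)
    (hLip : LipschitzWith (Real.toNNReal L) gradF)
    (y w : EuclideanSpace ℝ (Fin p)) :
    ‖gradF y‖ ^ 2 ≤ 2 * L * (F y - F (y - (1 / L) • (gradF y + w))) + ‖w‖ ^ 2 := by
  have hd := descent_lemma L hL F gradF hdiff hLip y (-((1 / L) • (gradF y + w)))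
  rw [← sub_eq_add_neg] at hd
  have h1 : (inner ℝ (gradF y) (-((1 / L) • (gradF y + w))) : ℝ)
      = -(1 / L) * (‖gradF y‖ ^ 2 + (inner ℝ (gradF y) w : ℝ)) := by
    rw [inner_neg_right, real_inner_smul_right, inner_add_right,
      real_inner_self_eq_norm_sq]; ring
  have h2 : ‖-((1 / L) • (gradF y + w))‖ ^ 2
      = (1 / L) ^ 2 * (‖gradF y‖ ^ 2 + 2 * (inner ℝ (gradF y) w : ℝ) + ‖w‖ ^ 2) := by
    rw [norm_neg, norm_smul, mul_pow, ← norm_add_sq_real, Real.norm_eq_abs, sq_abs]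
  rw [h1, h2] at hd
  have key : F y + -(1 / L) * (‖gradF y‖ ^ 2 + (inner ℝ (gradF y) w : ℝ))
      + L / 2 * ((1 / L) ^ 2 * (‖gradF y‖ ^ 2 + 2 * (inner ℝ (gradF y) w : ℝ) + ‖w‖ ^ 2))
      = F y + (‖w‖ ^ 2 - ‖gradF y‖ ^ 2) / (2 * L) := by
    field_simp; ring
  have hd2 : F (y - (1 / L) • (gradF y + w)) - F y
      ≤ (‖w‖ ^ 2 - ‖gradF y‖ ^ 2) / (2 * L) := by linarith [key ▸ hd]
  have h4 := (le_div_iff₀ (by positivity : (0:ℝ) < 2 * L)).mp hd2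
  nlinarith [h4]

theorem noisy_gd_random_index_grad_bound {p : ℕ} {Ω : Type*} [MeasureSpace Ω]
    [IsProbabilityMeasure (ℙ : Measure Ω)]
    (L σ Fstar : ℝ) (hL : 0 < L)
    (F : EuclideanSpace ℝ (Fin p) → ℝ)
    (gradF : EuclideanSpace ℝ (Fin p) → EuclideanSpace ℝ (Fin p))
    (hdiff : ∀ x, HasGradientAt F (gradF x) x)
    (hLip : LipschitzWith (Real.toNNReal L) gradF)
    (hmin : ∀ x, Fstar ≤ F x) (hattain : ∃ x, F x = Fstar)
    (T : ℕ) (hT : 0 < T)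
    (x z : ℕ → Ω → EuclideanSpace ℝ (Fin p)) (x0 : EuclideanSpace ℝ (Fin p))
    (hx0 : ∀ ω, x 0 ω = x0)
    (hxm : ∀ k, Measurable (x k)) (hzm : ∀ k, Measurable (z k))
    (hupd : ∀ k ω, x (k + 1) ω = x k ω - (1 / L) • (gradF (x k ω) + z k ω))
    (hindep : ∀ k, IndepFun (x k) (z k))
    (hmean : ∀ k, (∫ ω, z k ω) = 0) (hvar : ∀ k, (∫ ω, ‖z k ω‖ ^ 2) = p * σ ^ 2)
    (hintF : ∀ k, Integrable (fun ω => F (x k ω)))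
    (hintg : ∀ k, Integrable (fun ω => ‖gradF (x k ω)‖ ^ 2))
    (hintz : ∀ k, Integrable (z k)) (hintz2 : ∀ k, Integrable (fun ω => ‖z k ω‖ ^ 2)) :
    (1 / (T : ℝ)) * ∑ k ∈ Finset.range T, (∫ ω, ‖gradF (x k ω)‖ ^ 2) ≤
      2 * L * (F x0 - Fstar) / T + p * σ ^ 2 := by
  set a : ℕ → ℝ := fun k => ∫ ω, F (x k ω) with ha
  have hstep : ∀ k, (∫ ω, ‖gradF (x k ω)‖ ^ 2)
      ≤ 2 * L * (a k - a (k + 1)) + p * σ ^ 2 := by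
    intro k
    have hpt : ∀ ω, ‖gradF (x k ω)‖ ^ 2
        ≤ 2 * L * (F (x k ω) - F (x (k + 1) ω)) + ‖z k ω‖ ^ 2 := by
      intro ω
      have := step_lemma L hL F gradF hdiff hLip (x k ω) (z k ω)
      rwa [← hupd k ω] at this
    have hA : Integrable (fun ω => 2 * L * (F (x k ω) - F (x (k + 1) ω))) := by
      exact ((hintF k).sub (hintF (k + 1))).const_mul (2 * L)
    have hintR : Integrable
        (fun ω => 2 * L * (F (x k ω) - F (x (k + 1) ω)) + ‖z k ω‖ ^ 2) :=
      hA.add (hintz2 k)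
    calc (∫ ω, ‖gradF (x k ω)‖ ^ 2)
        ≤ ∫ ω, (2 * L * (F (x k ω) - F (x (k + 1) ω)) + ‖z k ω‖ ^ 2) :=
          integral_mono (hintg k) hintR hpt
      _ = 2 * L * (a k - a (k + 1)) + p * σ ^ 2 := by
          rw [integral_add hA (hintz2 k), integral_const_mul,
            integral_sub (hintF k) (hintF (k + 1)), hvar k]
  have hsum : (∑ k ∈ Finset.range T, (∫ ω, ‖gradF (x k ω)‖ ^ 2))
      ≤ 2 * L * (a 0 - a T) + T * (p * σ ^ 2) := by
    calc (∑ k ∈ Finset.range T, (∫ ω, ‖gradF (x k ω)‖ ^ 2))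
        ≤ ∑ k ∈ Finset.range T, (2 * L * (a k - a (k + 1)) + p * σ ^ 2) :=
          Finset.sum_le_sum fun k _ => hstep k
      _ = 2 * L * (a 0 - a T) + T * (p * σ ^ 2) := by
          rw [Finset.sum_add_distrib, ← Finset.mul_sum, Finset.sum_range_sub' a T,
            Finset.sum_const, Finset.card_range, nsmul_eq_mul]
  have ha0 : a 0 = F x0 := by
    have : (fun ω : Ω => F (x 0 ω)) = fun _ => F x0 := by
      funext ω; rw [hx0 ω]
    simp [ha, this]
  have haT : Fstar ≤ a T := by
    have : Fstar = ∫ (_ : Ω), Fstar := by simp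
    rw [this]
    exact integral_mono (integrable_const _) (hintF T) fun ω => hmin _
  have hTpos : (0:ℝ) < T := Nat.cast_pos.mpr hT
  calc (1 / (T : ℝ)) * ∑ k ∈ Finset.range T, (∫ ω, ‖gradF (x k ω)‖ ^ 2)
      ≤ (1 / (T : ℝ)) * (2 * L * (F x0 - Fstar) + T * (p * σ ^ 2)) := by
        apply mul_le_mul_of_nonneg_left _ (by positivity)
        calc (∑ k ∈ Finset.range T, (∫ ω, ‖gradF (x k ω)‖ ^ 2))
            ≤ 2 * L * (a 0 - a T) + T * (p * σ ^ 2) := hsum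
          _ ≤ 2 * L * (F x0 - Fstar) + T * (p * σ ^ 2) := by
              rw [ha0]; nlinarith [haT]
    _ = 2 * L * (F x0 - Fstar) / T + p * σ ^ 2 := by
        field_simp
end

section
/- Let F : ℝ^p → ℝ be convex and differentiable, r : ℝ^p → ℝ convex, η > 0, and x* any point. Given x and a vector v, let x⁺ = prox_{ηr}(x − ηv) and g = (1/η)(x − x⁺). Then ‖x⁺ − x*‖² ≤ ‖x − x*‖² − 2η[(F + r)(x⁺) − (F + r)(x*)] − 2η⟨v − ∇F(x), x⁺ − x*⟩, provided F is L-smooth with η ≤ 1/L and F + r is convex (this is the one-step inequality underlying the SVRG analysis). -/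
open scoped RealInnerProductSpace
open Topology

set_option maxHeartbeats 1000000 in

theorem svrg_one_step_ineq {p : ℕ} (L η : ℝ) (hη : 0 < η) (hηL : η ≤ 1 / L) (hL : 0 < L)
    (F r : EuclideanSpace ℝ (Fin p) → ℝ)
    (gradF : EuclideanSpace ℝ (Fin p) → EuclideanSpace ℝ (Fin p))
    (hFconv : ConvexOn ℝ Set.univ F)
    (hrconv : ConvexOn ℝ Set.univ r)
    (hdiff : ∀ x, HasGradientAt F (gradF x) x)
    (hLip : LipschitzWith (Real.toNNReal L) gradF)
    (x xstar v xplus : EuclideanSpace ℝ (Fin p))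
    (hxplus : ∀ u : EuclideanSpace ℝ (Fin p),
      (1 / 2) * ‖xplus - (x - η • v)‖ ^ 2 + η * r xplus ≤
        (1 / 2) * ‖u - (x - η • v)‖ ^ 2 + η * r u) :
    ‖xplus - xstar‖ ^ 2 ≤ ‖x - xstar‖ ^ 2 -
        2 * η * ((F xplus + r xplus) - (F xstar + r xstar)) -
        2 * η * ⟪v - gradF x, xplus - xstar⟫ := by
  have hlip' : ∀ a b : EuclideanSpace ℝ (Fin p), ‖gradF a - gradF b‖ ≤ L * ‖a - b‖ := by
    intro a b
    have h := hLip.dist_le_mul a b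
    rwa [Real.coe_toNNReal L hL.le, dist_eq_norm, dist_eq_norm] at h
  -- derivative along a line
  have hder : ∀ (z d : EuclideanSpace ℝ (Fin p)) (t : ℝ),
      HasDerivAt (fun s : ℝ => F (z + s • d)) ⟪gradF (z + t • d), d⟫ t := by
    intro z d t
    have hg : HasDerivAt (fun s : ℝ => z + s • d) d t := by
      simpa using ((hasDerivAt_id t).smul_const d).const_add z
    have hf := hasGradientAt_iff_hasFDerivAt.mp (hdiff (z + t • d))
    have h := hf.comp_hasDerivAt t hg
    simpa [Function.comp_def, InnerProductSpace.toDual_apply_apply] using h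
  -- first order condition from convexity
  have hconvlb : ∀ z w : EuclideanSpace ℝ (Fin p), F z + ⟪gradF z, w - z⟫ ≤ F w := by
    intro z w
    set d := w - z with hd
    have hderiv0 : HasDerivAt (fun s : ℝ => F (z + s • d)) ⟪gradF z, d⟫ 0 := by
      simpa using hder z d 0
    have hslope : ∀ t ∈ Set.Ioc (0:ℝ) 1,
        slope (fun s : ℝ => F (z + s • d)) 0 t ≤ F w - F z := by
      intro t ht
      have hcomb : z + t • d = (1 - t) • z + t • w := by
        rw [hd, smul_sub, sub_smul, one_smul]; abel
      have hcv := hFconv.2 (Set.mem_univ z) (Set.mem_univ w)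
        (by linarith [ht.2] : (0:ℝ) ≤ 1 - t) ht.1.le (by ring)
      rw [← hcomb] at hcv
      rw [slope_def_field]
      rw [div_le_iff₀ (by simpa using ht.1)]
      have h0 : z + (0:ℝ) • d = z := by simp
      rw [h0]
      simp only [smul_eq_mul] at hcv
      nlinarith [hcv]
    have htend : Filter.Tendsto (slope (fun s : ℝ => F (z + s • d)) 0) (𝓝[>] 0)
        (𝓝 ⟪gradF z, d⟫) := by
      refine (hasDerivAt_iff_tendsto_slope.mp hderiv0).mono_left (nhdsWithin_mono 0 ?_)
      intro t ht
      exact ne_of_gt ht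
    have hle : ⟪gradF z, d⟫ ≤ F w - F z :=
      le_of_tendsto htend (Filter.eventually_of_mem
        (Ioc_mem_nhdsGT_of_mem (by norm_num : (0:ℝ) ∈ Set.Ico (0:ℝ) 1)) hslope)
    linarith
  -- descent lemma
  have hdescent : ∀ z w : EuclideanSpace ℝ (Fin p),
      F w ≤ F z + ⟪gradF z, w - z⟫ + L / 2 * ‖w - z‖ ^ 2 := by
    intro z w
    set d := w - z with hd
    set ψ : ℝ → ℝ := fun t => F (z + t • d) - t * ⟪gradF z, d⟫ - L / 2 * t ^ 2 * ‖d‖ ^ 2 with hψ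
    have hψd : ∀ t : ℝ, HasDerivAt ψ
        (⟪gradF (z + t • d), d⟫ - ⟪gradF z, d⟫ - L * t * ‖d‖ ^ 2) t := by
      intro t
      have h1 := hder z d t
      have h2 : HasDerivAt (fun s : ℝ => s * ⟪gradF z, d⟫) ⟪gradF z, d⟫ t := by
        simpa using (hasDerivAt_id t).mul_const ⟪gradF z, d⟫
      have h3 : HasDerivAt (fun s : ℝ => L / 2 * s ^ 2 * ‖d‖ ^ 2) (L * t * ‖d‖ ^ 2) t := by
        have hp : HasDerivAt (fun s : ℝ => s ^ 2) (2 * t) t := by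
          simpa using hasDerivAt_pow 2 t
        have h := (hp.const_mul (L / 2)).mul_const (‖d‖ ^ 2)
        rw [show L * t * ‖d‖ ^ 2 = L / 2 * (2 * t) * ‖d‖ ^ 2 by ring]
        exact h
      exact (h1.sub h2).sub h3
    have hmono : AntitoneOn ψ (Set.Icc 0 1) := by
      refine antitoneOn_of_deriv_nonpos (convex_Icc 0 1) ?_ ?_ ?_
      · exact (Differentiable.continuous (fun t => (hψd t).differentiableAt)).continuousOn
      · exact fun t _ => ((hψd t).differentiableAt).differentiableWithinAt
      · intro t ht
        rw [interior_Icc] at ht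
        rw [(hψd t).deriv]
        have hb := hlip' (z + t • d) z
        have hnorm : ‖(z + t • d) - z‖ = t * ‖d‖ := by
          have : (z + t • d) - z = t • d := by abel
          rw [this, norm_smul, Real.norm_eq_abs, abs_of_pos ht.1]
        rw [hnorm] at hb
        have hin : ⟪gradF (z + t • d) - gradF z, d⟫ ≤ ‖gradF (z + t • d) - gradF z‖ * ‖d‖ :=
          real_inner_le_norm _ _
        rw [inner_sub_left] at hin
        nlinarith [mul_le_mul_of_nonneg_right hb (norm_nonneg d), norm_nonneg d]
    have h01 : ψ 1 ≤ ψ 0 :=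
      hmono (Set.left_mem_Icc.mpr zero_le_one) (Set.right_mem_Icc.mpr zero_le_one) zero_le_one
    have hzw : z + (1:ℝ) • d = w := by rw [one_smul, hd]; abel
    simp only [hψ, hzw, one_pow, mul_one, zero_smul, add_zero, zero_pow, mul_zero, zero_mul,
      sub_zero, one_mul] at h01
    linarith
  -- prox variational inequality
  have hVI : ∀ u : EuclideanSpace ℝ (Fin p),
      0 ≤ ⟪xplus - (x - η • v), u - xplus⟫ + η * (r u - r xplus) := by
    intro u
    set y := x - η • v with hy
    set a := xplus - y with ha
    set b := u - xplus with hb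
    have key : ∀ t : ℝ, t ∈ Set.Ioc (0:ℝ) 1 →
        0 ≤ ⟪a, b⟫ + t / 2 * ‖b‖ ^ 2 + η * (r u - r xplus) := by
      intro t ht
      have hcomb : xplus + t • b = (1 - t) • xplus + t • u := by
        rw [hb, smul_sub, sub_smul, one_smul]; abel
      have hr := hrconv.2 (Set.mem_univ xplus) (Set.mem_univ u)
        (by linarith [ht.2] : (0:ℝ) ≤ 1 - t) ht.1.le (by ring)
      rw [← hcomb] at hr
      have hx1 := hxplus (xplus + t • b)
      have hexp : ‖(xplus + t • b) - y‖ ^ 2 = ‖a‖ ^ 2 + 2 * t * ⟪a, b⟫ + t ^ 2 * ‖b‖ ^ 2 := by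
        have he : (xplus + t • b) - y = a + t • b := by rw [ha]; abel
        rw [he, norm_add_sq_real, real_inner_smul_right, norm_smul, Real.norm_eq_abs,
          mul_pow, sq_abs]
        ring
      have h2 : (1/2) * ‖a‖ ^ 2 + η * r xplus ≤
          (1/2) * (‖a‖ ^ 2 + 2 * t * ⟪a, b⟫ + t ^ 2 * ‖b‖ ^ 2)
            + η * ((1 - t) * r xplus + t * r u) := by
        refine hx1.trans ?_
        rw [hexp]
        exact add_le_add le_rfl (mul_le_mul_of_nonneg_left (by simpa only [smul_eq_mul] using hr) hη.le)
      have h3 : 0 ≤ t * (⟪a, b⟫ + t / 2 * ‖b‖ ^ 2 + η * (r u - r xplus)) := by nlinarith [h2]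
      exact le_of_not_gt fun hC => absurd h3 (not_le.mpr (mul_neg_of_pos_of_neg ht.1 hC))
    by_contra hcon
    push_neg at hcon
    set S := ⟪a, b⟫ + η * (r u - r xplus) with hS
    have hS0 : S < 0 := by
      have := hcon
      linarith [this]
    set N := ‖b‖ ^ 2 with hN
    have hNn : 0 ≤ N := sq_nonneg _
    set t0 := min 1 (-S / (N + 1)) with ht0
    have ht0pos : 0 < t0 := lt_min one_pos (div_pos (by linarith) (by linarith))
    have hk := key t0 ⟨ht0pos, min_le_left _ _⟩
    have h5 : t0 * (N + 1) ≤ -S := (le_div_iff₀ (by linarith)).mp (min_le_right _ _)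
    nlinarith [mul_nonneg ht0pos.le hNn, hk, h5, ht0pos]
  -- assemble
  have hA := hconvlb x xstar
  have hB := hdescent x xplus
  have hV := hVI xstar
  have hηL' : η * L ≤ 1 := by
    rw [le_div_iff₀ hL] at hηL; exact hηL
  have e1 : xplus - xstar = (xplus - x) - (xstar - x) := by abel
  have e2 : xstar - xplus = (xstar - x) - (xplus - x) := by abel
  have e3 : xplus - (x - η • v) = (xplus - x) + η • v := by abel
  have hVexp : 0 ≤ ⟪xplus - x, xstar - x⟫ - ‖xplus - x‖ ^ 2 + η * ⟪v, xstar - x⟫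
      - η * ⟪v, xplus - x⟫ + η * (r xstar - r xplus) := by
    rw [e3, e2] at hV
    rw [inner_add_left] at hV
    have q1 : ⟪xplus - x, xstar - x - (xplus - x)⟫ = ⟪xplus - x, xstar - x⟫ - ‖xplus - x‖ ^ 2 := by
      rw [inner_sub_right, real_inner_self_eq_norm_sq]
    have q2 : ⟪η • v, xstar - x - (xplus - x)⟫ = η * ⟪v, xstar - x⟫ - η * ⟪v, xplus - x⟫ := by
      rw [real_inner_smul_left, inner_sub_right]; ring
    rw [q1, q2] at hV
    linarith [hV]
  have hGoalInner : ⟪v - gradF x, xplus - xstar⟫ = ⟪v, xplus - x⟫ - ⟪v, xstar - x⟫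
      - ⟪gradF x, xplus - x⟫ + ⟪gradF x, xstar - x⟫ := by
    rw [e1]
    simp only [inner_sub_left, inner_sub_right]
    ring
  have hNormId : ‖x - xstar‖ ^ 2 = ‖xstar - x‖ ^ 2 := by rw [norm_sub_rev]
  have hN2 : ‖xplus - xstar‖ ^ 2 = ‖xplus - x‖ ^ 2 - 2 * ⟪xplus - x, xstar - x⟫
      + ‖xstar - x‖ ^ 2 := by
    rw [e1]; exact norm_sub_sq_real _ _
  have hA2 : 2 * η * (F x + ⟪gradF x, xstar - x⟫) ≤ 2 * η * F xstar :=
    mul_le_mul_of_nonneg_left hA (by linarith)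
  have hB2 : 2 * η * F xplus ≤
      2 * η * (F x + ⟪gradF x, xplus - x⟫ + L / 2 * ‖xplus - x‖ ^ 2) :=
    mul_le_mul_of_nonneg_left hB (by linarith)
  have hL2 : η * L * ‖xplus - x‖ ^ 2 ≤ ‖xplus - x‖ ^ 2 := by
    nlinarith [sq_nonneg ‖xplus - x‖]
  rw [hGoalInner, hN2, hNormId]
  linarith [hVexp, hA2, hB2, hL2]
end
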